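/- Let X be a metric space with a system of dyadic cubes Δ (partitioning, nesting, with each cube Q of side 2^{-k} satisfying U(x_Q, (1/6)2^{-k}) ⊆ Q ⊆ B(x_Q, (8/3)2^{-k})). Let E ⊊ X be a nonempty closed set. Then there exists a family W of cubes in Δ such that: (1) X \ E = ⋃_{W ∈ W} W with the cubes in W pairwise disjoint; and (2) diam W ≤ dist(W, E) for all W ∈ W. Moreover, if there is c > 0 such that diam U(x,r) ≥ cr whenever U(x,r) ≠ X, then also dist(W, E) < (128/c) diam W for all W ∈ W. -/

import Mathlib

open Metric Set
open scoped ENNReal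

/-- Distance between two sets: `dist(A,B) = inf_{a ∈ A, b ∈ B} d(a,b)` (in `ℝ≥0∞`). -/
noncomputable def setSepDist {X : Type*} [PseudoEMetricSpace X] (A B : Set X) : ℝ≥0∞ :=
  ⨅ (a ∈ A) (b ∈ B), edist a b

lemma setSepDist_le_edist {X : Type*} [PseudoEMetricSpace X] {A B : Set X} {a b : X}
    (ha : a ∈ A) (hb : b ∈ B) : setSepDist A B ≤ edist a b :=
  iInf_le_of_le a (iInf_le_of_le ha (iInf_le_of_le b (iInf_le_of_le hb le_rfl)))

lemma le_add_setSepDist {X : Type*} [PseudoEMetricSpace X] {A B : Set X} {d c : ℝ≥0∞}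
    (h : ∀ a ∈ A, ∀ b ∈ B, d ≤ c + edist a b) : d ≤ c + setSepDist A B := by
  unfold setSepDist
  simp only [ENNReal.add_iInf]
  exact le_iInf fun a => le_iInf fun ha => le_iInf fun b => le_iInf fun hb => h a ha b hb

/-- Whitney decomposition: given a system of dyadic cubes `Δ` in a metric space and a nonempty
closed proper subset `E`, there is a pairwise disjoint family `W` of cubes partitioning `X \ E`
with `diam W ≤ dist(W,E)`; moreover, if open balls have diameter at least `c r` (unless they are
all of `X`), then also `dist(W,E) < (128/c) diam W`. -/
theorem whitney_decomposition
    {X : Type*} [MetricSpace X] (Δ : ℤ → Set (Set X))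
    (hpart : ∀ k : ℤ, ⋃₀ (Δ k) = univ)
    (hdisj : ∀ k : ℤ, (Δ k).Pairwise fun Q R => Disjoint Q R)
    (hnest : ∀ (k m : ℤ) (Q R : Set X), m ≤ k → Q ∈ Δ k → R ∈ Δ m → Q ⊆ R ∨ Disjoint Q R)
    (hround : ∀ (k : ℤ), ∀ Q ∈ Δ k, ∃ x : X,
      ball x ((1 / 6) * (2 : ℝ) ^ (-k)) ⊆ Q ∧ Q ⊆ closedBall x ((8 / 3) * (2 : ℝ) ^ (-k)))
    (E : Set X) (hEcl : IsClosed E) (hEne : E.Nonempty) (hEproper : E ≠ univ) :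
    ∃ W : Set (Set X),
      (∀ w ∈ W, ∃ k : ℤ, w ∈ Δ k) ∧
      ⋃₀ W = Eᶜ ∧
      (W.Pairwise fun a b => Disjoint a b) ∧
      (∀ w ∈ W, EMetric.diam w ≤ setSepDist w E) ∧
      (∀ c : ℝ, 0 < c →
        (∀ (x : X) (r : ℝ), 0 < r → ball x r ≠ univ →
          ENNReal.ofReal (c * r) ≤ EMetric.diam (ball x r)) →
        ∀ w ∈ W, setSepDist w E < ENNReal.ofReal (128 / c) * EMetric.diam w) := by
  classical
  have hex : ∀ (k : ℤ) (x : X), ∃ Q, Q ∈ Δ k ∧ x ∈ Q := by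
    intro k x
    have hx : x ∈ ⋃₀ Δ k := by rw [hpart]; trivial
    exact hx
  choose Qf hQmem hQx using hex
  have huniq : ∀ (k : ℤ) (x : X) (Q : Set X), Q ∈ Δ k → x ∈ Q → Q = Qf k x := by
    intro k x Q hQ hx
    by_contra hne
    exact (Set.disjoint_left.mp (hdisj k hQ (hQmem k x) hne) hx) (hQx k x)
  choose ctr hball hcball using hround
  have hrpos : ∀ k : ℤ, (0:ℝ) < (2:ℝ) ^ (-k) := fun k => zpow_pos (by norm_num) _
  have hdiam : ∀ (k : ℤ) (Q : Set X) (hQ : Q ∈ Δ k),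
      EMetric.diam Q ≤ ENNReal.ofReal ((16/3) * (2:ℝ) ^ (-k)) := by
    intro k Q hQ
    apply EMetric.diam_le
    intro a ha b hb
    have ha' := hcball k Q hQ ha
    have hb' := hcball k Q hQ hb
    rw [mem_closedBall] at ha' hb'
    rw [edist_dist]
    apply ENNReal.ofReal_le_ofReal
    calc dist a b ≤ dist a (ctr k Q hQ) + dist (ctr k Q hQ) b := dist_triangle _ _ _
      _ ≤ (8/3) * 2^(-k) + (8/3) * 2^(-k) := by
          rw [dist_comm (ctr k Q hQ) b]; linarith
      _ = (16/3) * 2^(-k) := by ring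
  have hctrmem : ∀ (k : ℤ) (Q : Set X) (hQ : Q ∈ Δ k), ctr k Q hQ ∈ Q := fun k Q hQ =>
    hball k Q hQ (mem_ball_self (by positivity))
  obtain ⟨e₀, he₀⟩ := hEne
  -- existence of good cubes at fine scales
  have hgood_exists : ∀ x : X, x ∉ E → ∃ k : ℤ,
      (Qf k x ∩ E = ∅ ∧ EMetric.diam (Qf k x) ≤ setSepDist (Qf k x) E) := by
    intro x hx
    obtain ⟨ε, hε, hballE⟩ := Metric.isOpen_iff.mp hEcl.isOpen_compl x hx
    have hdistE : ∀ e ∈ E, ε ≤ dist x e := by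
      intro e he
      by_contra h
      push_neg at h
      exact (hballE (by rw [mem_ball, dist_comm]; exact h)) he
    obtain ⟨n, hn⟩ := exists_pow_lt_of_lt_one (show (0:ℝ) < (3/32)*ε by linarith)
      (by norm_num : (1/2:ℝ) < 1)
    have hklt : (32/3) * (2:ℝ)^(-(n:ℤ)) < ε := by
      have h2 : (2:ℝ)^(-(n:ℤ)) = (1/2:ℝ)^n := by
        rw [zpow_neg, zpow_natCast, one_div, inv_pow]
      rw [h2]; nlinarith [hn]
    refine ⟨(n : ℤ), ?_, ?_⟩
    · rw [Set.eq_empty_iff_forall_notMem]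
      rintro e ⟨heQ, heE⟩
      have h1 : edist x e ≤ EMetric.diam (Qf (n:ℤ) x) :=
        EMetric.edist_le_diam_of_mem (hQx _ x) heQ
      have h2 : dist x e ≤ (16/3)*(2:ℝ)^(-(n:ℤ)) := by
        have h3 := h1.trans (hdiam (n:ℤ) (Qf (n:ℤ) x) (hQmem _ x))
        rw [edist_dist] at h3
        exact (ENNReal.ofReal_le_ofReal_iff (by positivity)).mp h3
      have h3 := hdistE e heE
      have h4 : (16/3)*(2:ℝ)^(-(n:ℤ)) < (32/3)*(2:ℝ)^(-(n:ℤ)) := by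
        have := hrpos (n:ℤ); linarith
      linarith
    · have hQd := hdiam (n:ℤ) (Qf (n:ℤ) x) (hQmem _ x)
      have key : ENNReal.ofReal ε ≤ EMetric.diam (Qf (n:ℤ) x) + setSepDist (Qf (n:ℤ) x) E := by
        apply le_add_setSepDist
        intro q hq e he
        calc ENNReal.ofReal ε ≤ edist x e := by
              rw [edist_dist]; exact ENNReal.ofReal_le_ofReal (hdistE e he)
          _ ≤ edist x q + edist q e := edist_triangle _ _ _
          _ ≤ EMetric.diam (Qf (n:ℤ) x) + edist q e := by
              gcongr
              exact EMetric.edist_le_diam_of_mem (hQx _ x) hq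
      have h2 : EMetric.diam (Qf (n:ℤ) x) + EMetric.diam (Qf (n:ℤ) x) ≤ ENNReal.ofReal ε := by
        calc EMetric.diam (Qf (n:ℤ) x) + EMetric.diam (Qf (n:ℤ) x)
            ≤ ENNReal.ofReal ((16/3)*(2:ℝ)^(-(n:ℤ))) + ENNReal.ofReal ((16/3)*(2:ℝ)^(-(n:ℤ))) :=
              add_le_add hQd hQd
          _ = ENNReal.ofReal ((32/3)*(2:ℝ)^(-(n:ℤ))) := by
              rw [← ENNReal.ofReal_add (by positivity) (by positivity)]
              congr 1; ring
          _ ≤ ENNReal.ofReal ε := ENNReal.ofReal_le_ofReal hklt.le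
      have hfin : EMetric.diam (Qf (n:ℤ) x) ≠ ∞ := (hQd.trans_lt ENNReal.ofReal_lt_top).ne
      exact (ENNReal.add_le_add_iff_left hfin).mp (h2.trans key)
  -- good levels are bounded below
  have hbdd : ∀ x : X, ∃ b : ℤ, ∀ k : ℤ,
      (Qf k x ∩ E = ∅ ∧ EMetric.diam (Qf k x) ≤ setSepDist (Qf k x) E) → b ≤ k := by
    intro x
    obtain ⟨n₀, hn₀⟩ := exists_nat_gt (12 * dist x e₀)
    refine ⟨-(n₀:ℤ), ?_⟩
    rintro k ⟨hQE, hQsep⟩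
    have hsub := hball k (Qf k x) (hQmem k x)
    have he₀Q : e₀ ∉ Qf k x := fun h => (Set.eq_empty_iff_forall_notMem.mp hQE e₀) ⟨h, he₀⟩
    have h1 : (1/6) * (2:ℝ)^(-k) ≤ dist (ctr k (Qf k x) (hQmem k x)) e₀ := by
      by_contra h
      push_neg at h
      exact he₀Q (hsub (by rw [mem_ball, dist_comm]; exact h))
    have hyx : dist (ctr k (Qf k x) (hQmem k x)) x ≤ dist x e₀ := by
      have h2 : edist (ctr k (Qf k x) (hQmem k x)) x ≤ setSepDist (Qf k x) E :=
        (EMetric.edist_le_diam_of_mem (hctrmem k (Qf k x) (hQmem k x)) (hQx k x)).trans hQsep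
      have h3 : edist (ctr k (Qf k x) (hQmem k x)) x ≤ edist x e₀ :=
        h2.trans (setSepDist_le_edist (hQx k x) he₀)
      rw [edist_dist, edist_dist] at h3
      exact (ENNReal.ofReal_le_ofReal_iff dist_nonneg).mp h3
    have h4 : (1/6) * (2:ℝ)^(-k) ≤ 2 * dist x e₀ := by
      have ht := dist_triangle (ctr k (Qf k x) (hQmem k x)) x e₀
      linarith
    have h5 : (2:ℝ)^(-k) < (2:ℝ)^(n₀:ℤ) := by
      have h7 : ((n₀:ℝ)) ≤ (2:ℝ)^(n₀:ℤ) := by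
        rw [zpow_natCast]
        exact_mod_cast (Nat.lt_two_pow_self (n := n₀)).le
      linarith
    have h8 : -k < (n₀:ℤ) := (zpow_lt_zpow_iff_right₀ (by norm_num : (1:ℝ) < 2)).mp h5
    omega
  have hkey : ∀ x : X, x ∉ E → ∃ k : ℤ,
      (Qf k x ∩ E = ∅ ∧ EMetric.diam (Qf k x) ≤ setSepDist (Qf k x) E) ∧
      ∀ j : ℤ, (Qf j x ∩ E = ∅ ∧ EMetric.diam (Qf j x) ≤ setSepDist (Qf j x) E) → k ≤ j := by
    intro x hx
    obtain ⟨lb, h1, h2⟩ := Int.exists_least_of_bdd (hbdd x) (hgood_exists x hx)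
    exact ⟨lb, h1, h2⟩
  choose! kf hkf hkmin using hkey
  refine ⟨{Q | ∃ x, x ∉ E ∧ Q = Qf (kf x) x}, ?_, ?_, ?_, ?_, ?_⟩
  · rintro w ⟨x, hx, rfl⟩
    exact ⟨kf x, hQmem _ x⟩
  · apply Set.eq_of_subset_of_subset
    · rintro y ⟨w, ⟨x, hx, rfl⟩, hyw⟩
      intro hyE
      exact Set.eq_empty_iff_forall_notMem.mp (hkf x hx).1 y ⟨hyw, hyE⟩
    · intro x hx
      exact ⟨Qf (kf x) x, ⟨x, hx, rfl⟩, hQx _ x⟩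
  · have key : ∀ x, x ∉ E → ∀ y, y ∉ E → kf x ≤ kf y →
        Qf (kf x) x ≠ Qf (kf y) y → Disjoint (Qf (kf x) x) (Qf (kf y) y) := by
      intro x hx y hy hle hne
      rcases hnest (kf y) (kf x) (Qf (kf y) y) (Qf (kf x) x) hle (hQmem _ y) (hQmem _ x)
        with hsub | hd
      · exfalso
        have hyQ : y ∈ Qf (kf x) x := hsub (hQx _ y)
        have hcube_eq : Qf (kf x) x = Qf (kf x) y := huniq (kf x) y (Qf (kf x) x) (hQmem _ x) hyQ
        have hgoodx := hkf x hx
        have hle2 : kf y ≤ kf x := hkmin y hy (kf x) (by rw [← hcube_eq]; exact hgoodx)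
        have heq : kf x = kf y := le_antisymm hle hle2
        apply hne
        rw [hcube_eq, heq]
      · exact hd.symm
    rintro w₁ ⟨x, hx, rfl⟩ w₂ ⟨y, hy, rfl⟩ hne
    rcases le_total (kf x) (kf y) with h | h
    · exact key x hx y hy h hne
    · exact (key y hy x hx h (Ne.symm hne)).symm
  · rintro w ⟨x, hx, rfl⟩
    exact (hkf x hx).2
  · rintro c hc hcb w ⟨x, hx, rfl⟩
    have hc0 : c ≠ 0 := ne_of_gt hc
    set k := kf x with hk
    have hgood := hkf x hx
    -- lower bound on diam Q
    have hbne : ball (ctr k (Qf k x) (hQmem k x)) ((1/6) * (2:ℝ)^(-k)) ≠ univ := by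
      intro hU
      have hmem : e₀ ∈ Qf k x := hball k (Qf k x) (hQmem k x) (hU ▸ mem_univ e₀)
      exact Set.eq_empty_iff_forall_notMem.mp hgood.1 e₀ ⟨hmem, he₀⟩
    have hdlow : ENNReal.ofReal (c * ((1/6) * (2:ℝ)^(-k))) ≤ EMetric.diam (Qf k x) :=
      (hcb _ _ (by positivity) hbne).trans (EMetric.diam_mono (hball k (Qf k x) (hQmem k x)))
    -- parent cube is not good
    have hnotgood : ¬ (Qf (k-1) x ∩ E = ∅ ∧
        EMetric.diam (Qf (k-1) x) ≤ setSepDist (Qf (k-1) x) E) := by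
      intro h
      have := hkmin x hx (k-1) h
      omega
    have hQP : Qf k x ⊆ Qf (k-1) x := by
      rcases hnest k (k-1) (Qf k x) (Qf (k-1) x) (by omega) (hQmem k x) (hQmem (k-1) x)
        with h | h
      · exact h
      · exact absurd (hQx (k-1) x) (Set.disjoint_left.mp h (hQx k x))
    have hPdiam : EMetric.diam (Qf (k-1) x) ≤ ENNReal.ofReal ((32/3) * (2:ℝ)^(-k)) := by
      have h2 : (16/3:ℝ) * (2:ℝ)^(-(k-1)) = (32/3) * (2:ℝ)^(-k) := by
        have hexp : -(k-1) = (-k) + 1 := by ring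
        rw [hexp, zpow_add₀ (by norm_num : (2:ℝ) ≠ 0), zpow_one]; ring
      calc EMetric.diam (Qf (k-1) x) ≤ ENNReal.ofReal ((16/3) * (2:ℝ)^(-(k-1))) :=
            hdiam (k-1) (Qf (k-1) x) (hQmem (k-1) x)
        _ = ENNReal.ofReal ((32/3) * (2:ℝ)^(-k)) := by rw [h2]
    have hRHS : ENNReal.ofReal ((64/3) * (2:ℝ)^(-k)) ≤
        ENNReal.ofReal (128/c) * EMetric.diam (Qf k x) := by
      calc ENNReal.ofReal ((64/3) * (2:ℝ)^(-k))
          = ENNReal.ofReal (128/c) * ENNReal.ofReal (c * ((1/6) * (2:ℝ)^(-k))) := by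
            rw [← ENNReal.ofReal_mul (by positivity : (0:ℝ) ≤ 128/c)]
            congr 1
            field_simp
            ring
        _ ≤ ENNReal.ofReal (128/c) * EMetric.diam (Qf k x) := mul_le_mul_right hdlow _
    rcases not_and_or.mp hnotgood with hPE | hsep
    · obtain ⟨e, heP, heE⟩ : ∃ e, e ∈ Qf (k-1) x ∧ e ∈ E := by
        rcases Set.eq_empty_or_nonempty (Qf (k-1) x ∩ E) with h | h
        · exact absurd h hPE
        · obtain ⟨e, he⟩ := h; exact ⟨e, he.1, he.2⟩
      have h1 : setSepDist (Qf k x) E ≤ edist x e := setSepDist_le_edist (hQx k x) heE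
      have h2 : edist x e ≤ EMetric.diam (Qf (k-1) x) :=
        EMetric.edist_le_diam_of_mem (hQP (hQx k x)) heP
      have h3 : setSepDist (Qf k x) E ≤ ENNReal.ofReal ((32/3) * (2:ℝ)^(-k)) :=
        (h1.trans h2).trans hPdiam
      have h4 : ENNReal.ofReal ((32/3) * (2:ℝ)^(-k)) < ENNReal.ofReal ((64/3) * (2:ℝ)^(-k)) := by
        apply (ENNReal.ofReal_lt_ofReal_iff (by positivity)).mpr
        have := hrpos k; linarith
      exact lt_of_le_of_lt h3 (h4.trans_le hRHS)
    · push_neg at hsep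
      have h1 : setSepDist (Qf k x) E ≤ EMetric.diam (Qf (k-1) x) + setSepDist (Qf (k-1) x) E := by
        apply le_add_setSepDist
        intro p hp e he
        calc setSepDist (Qf k x) E ≤ edist x e := setSepDist_le_edist (hQx k x) he
          _ ≤ edist x p + edist p e := edist_triangle _ _ _
          _ ≤ EMetric.diam (Qf (k-1) x) + edist p e := by
              gcongr
              exact EMetric.edist_le_diam_of_mem (hQP (hQx k x)) hp
      have hPfin : EMetric.diam (Qf (k-1) x) ≠ ∞ := (hPdiam.trans_lt ENNReal.ofReal_lt_top).ne
      have h2 : setSepDist (Qf k x) E <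
          EMetric.diam (Qf (k-1) x) + EMetric.diam (Qf (k-1) x) :=
        h1.trans_lt (ENNReal.add_lt_add_left hPfin hsep)
      have h3 : EMetric.diam (Qf (k-1) x) + EMetric.diam (Qf (k-1) x) ≤
          ENNReal.ofReal ((64/3) * (2:ℝ)^(-k)) := by
        calc EMetric.diam (Qf (k-1) x) + EMetric.diam (Qf (k-1) x)
            ≤ ENNReal.ofReal ((32/3) * (2:ℝ)^(-k)) + ENNReal.ofReal ((32/3) * (2:ℝ)^(-k)) :=
              add_le_add hPdiam hPdiam
          _ = ENNReal.ofReal ((64/3) * (2:ℝ)^(-k)) := by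
              rw [← ENNReal.ofReal_add (by positivity) (by positivity)]
              congr 1; ring
      exact h2.trans_le (h3.trans hRHS)
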